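/- arXiv:1603.07825 — 2 statements merged into one kernel-verified Lean document; each statement's English description precedes it below -/
import Mathlib

section
/- Define H(β) = 1 - β - Π_{j ∈ d} (1 - (m_j/m) β) for positive reals m_j ≤ m and a finite index set d with |d| ≥ 2. Then H(0) = 0 = H(1) fails in general, but H(0) = 0, and if Σ_{j ∈ d} m_j > m (i.e., H'(0) > 0), then H has a unique root in the open interval (0, 1]. -/
/-- For `H(β) = 1 - β - Π_{j∈d} (1 - (m_j/m) β)` with `0 < m_j ≤ m`, `|d| ≥ 2`:
`H(0) = 0`, and if `Σ_j m_j > m` (i.e. `H'(0) > 0`), then `H` has a unique root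
in the open-closed interval `(0, 1]`. -/
theorem likelihood_poly_unique_root {ι : Type*} (d : Finset ι) (hd : 2 ≤ d.card)
    (m : ℝ) (hm : 0 < m) (mj : ι → ℝ) (hmj : ∀ j ∈ d, 0 < mj j ∧ mj j ≤ m)
    (hsum : m < ∑ j ∈ d, mj j) :
    let H : ℝ → ℝ := fun β => 1 - β - ∏ j ∈ d, (1 - (mj j / m) * β)
    H 0 = 0 ∧ ∃! β, β ∈ Set.Ioc (0:ℝ) 1 ∧ H β = 0 := by
  classical
  intro H
  set c : ι → ℝ := fun j => mj j / m with hc_def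
  have hc : ∀ j ∈ d, 0 < c j ∧ c j ≤ 1 := by
    intro j hj
    obtain ⟨h1, h2⟩ := hmj j hj
    exact ⟨div_pos h1 hm, (div_le_one hm).2 h2⟩
  have hdne : d.Nonempty := Finset.card_pos.1 (by omega)
  -- factor positivity on [0,1]
  have hfac_pos : ∀ x : ℝ, x < 1 → ∀ j ∈ d, (0:ℝ) < 1 - c j * x := by
    intro x hx j hj
    rcases le_or_gt (c j * x) 0 with h | h
    · linarith
    · have hxpos : 0 < x := by
        rcases le_or_gt x 0 with h' | h'
        · exfalso; nlinarith [(hc j hj).1, (hc j hj).2]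
        · exact h'
      nlinarith [(hc j hj).1, (hc j hj).2]
  -- derivative
  set D : ℝ → ℝ := fun x => ∑ j ∈ d, c j * ∏ k ∈ d.erase j, (1 - c k * x) with hD_def
  have hH' : ∀ x : ℝ, HasDerivAt H (D x - 1) x := by
    intro x
    have hprod : HasDerivAt (fun x => ∏ j ∈ d, (1 - c j * x))
        (∑ j ∈ d, (∏ k ∈ d.erase j, (1 - c k * x)) • (-(c j))) x := by
      apply HasDerivAt.fun_finsetProd
      intro j hj
      simpa using ((hasDerivAt_id x).const_mul (c j)).const_sub 1
    have h1 : HasDerivAt (fun x : ℝ => 1 - x) (-1 : ℝ) x := by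
      simpa using (hasDerivAt_id x).const_sub 1
    have := h1.sub hprod
    convert this using 1
    case e'_4 => rfl
    case e'_5 => rfl
    case e'_8 => rfl
    have hrw : ∑ j ∈ d, (∏ k ∈ d.erase j, (1 - c k * x)) • (-(c j))
        = -∑ j ∈ d, c j * ∏ k ∈ d.erase j, (1 - c k * x) := by
      rw [← Finset.sum_neg_distrib]
      exact Finset.sum_congr rfl fun j _ => by simp [smul_eq_mul]; ring
    rw [hrw]
    simp only [hD_def]
    ring
  have hHcont : Continuous H := by
    have : Differentiable ℝ H := fun x => (hH' x).differentiableAt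
    exact this.continuous
  -- D is strictly antitone on [0,1)
  have hDanti : ∀ x y : ℝ, 0 ≤ x → x < y → y < 1 → D y < D x := by
    intro x y hx0 hxy hy1
    apply Finset.sum_lt_sum_of_nonempty hdne
    intro j hj
    have hcj := (hc j hj).1
    have hene : (d.erase j).Nonempty := by
      rw [← Finset.card_pos, Finset.card_erase_of_mem hj]; omega
    have hprodlt : ∏ k ∈ d.erase j, (1 - c k * y) < ∏ k ∈ d.erase j, (1 - c k * x) := by
      apply Finset.prod_lt_prod_of_nonempty _ _ hene
      · intro k hk
        exact hfac_pos y hy1 k (Finset.mem_of_mem_erase hk)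
      · intro k hk
        have hck := (hc k (Finset.mem_of_mem_erase hk)).1
        nlinarith
    exact mul_lt_mul_of_pos_left hprodlt hcj
  -- strict concavity on [0,1]
  have hSC : StrictConcaveOn ℝ (Set.Icc (0:ℝ) 1) H := by
    apply StrictAntiOn.strictConcaveOn_of_deriv (convex_Icc 0 1) hHcont.continuousOn
    rw [interior_Icc]
    intro x hx y hy hxy
    have hdx : deriv H x = D x - 1 := (hH' x).deriv
    have hdy : deriv H y = D y - 1 := (hH' y).deriv
    rw [hdx, hdy]
    have := hDanti x y hx.1.le hxy hy.2
    linarith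
  have hH0 : H 0 = 0 := by simp [H]
  refine ⟨hH0, ?_⟩
  -- D 0 - 1 > 0
  have hD0 : 1 < D 0 := by
    have : D 0 = ∑ j ∈ d, c j := by
      simp [hD_def]
    rw [this, hc_def]
    rw [← Finset.sum_div]
    exact (one_lt_div hm).2 hsum
  -- find δ > 0 with deriv positive on [0, δ]
  have hDcont : Continuous D := by
    apply continuous_finset_sum
    intro j _
    exact continuous_const.mul (continuous_finset_prod _ (fun k _ =>
      continuous_const.sub (continuous_const.mul continuous_id)))
  have hev : ∀ᶠ x in nhds (0:ℝ), 1 < D x :=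
    (hDcont.tendsto 0).eventually (eventually_gt_nhds hD0)
  obtain ⟨ε, hε, hball⟩ := Metric.eventually_nhds_iff.1 hev
  set δ : ℝ := min (ε / 2) (1 / 2) with hδ_def
  have hδpos : 0 < δ := by positivity
  have hδ1 : δ ≤ 1 := by
    apply le_trans (min_le_right _ _); norm_num
  have hδhalf : δ < 1 := lt_of_le_of_lt (min_le_right _ _) (by norm_num)
  have hDpos : ∀ x ∈ Set.Icc (0:ℝ) δ, 1 < D x := by
    intro x hx
    apply hball
    rw [Real.dist_eq, sub_zero, abs_of_nonneg hx.1]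
    calc x ≤ δ := hx.2
    _ ≤ ε / 2 := min_le_left _ _
    _ < ε := by linarith
  have hmono : StrictMonoOn H (Set.Icc (0:ℝ) δ) := by
    apply strictMonoOn_of_deriv_pos (convex_Icc 0 δ) hHcont.continuousOn
    intro x hx
    rw [interior_Icc] at hx
    rw [(hH' x).deriv]
    have := hDpos x ⟨hx.1.le, hx.2.le⟩
    linarith
  have hHδ : 0 < H δ := by
    have := hmono (Set.left_mem_Icc.2 hδpos.le) (Set.right_mem_Icc.2 hδpos.le) hδpos
    rwa [hH0] at this
  -- H 1 ≤ 0
  have hH1 : H 1 ≤ 0 := by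
    have hprodnn : (0:ℝ) ≤ ∏ j ∈ d, (1 - c j * 1) := by
      apply Finset.prod_nonneg
      intro j hj
      have := (hc j hj).2
      linarith
    simp only [H]
    linarith
  -- existence via IVT
  have hIVT : (0:ℝ) ∈ H '' Set.Icc δ 1 := by
    apply intermediate_value_Icc' hδ1 hHcont.continuousOn
    exact ⟨hH1, hHδ.le⟩
  obtain ⟨β₀, hβ₀mem, hβ₀⟩ := hIVT
  have hβ₀Ioc : β₀ ∈ Set.Ioc (0:ℝ) 1 := ⟨lt_of_lt_of_le hδpos hβ₀mem.1, hβ₀mem.2⟩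
  refine ⟨β₀, ⟨hβ₀Ioc, hβ₀⟩, ?_⟩
  -- uniqueness
  have key : ∀ a b : ℝ, a ∈ Set.Ioc (0:ℝ) 1 → b ∈ Set.Ioc (0:ℝ) 1 → H a = 0 → H b = 0 →
      a < b → False := by
    intro a b ha hb hHa hHb hab
    have h0mem : (0:ℝ) ∈ Set.Icc (0:ℝ) 1 := by norm_num
    have hbmem : b ∈ Set.Icc (0:ℝ) 1 := ⟨hb.1.le, hb.2⟩
    have hne : (0:ℝ) ≠ b := (ne_of_lt hb.1)
    set t : ℝ := 1 - a / b with ht_def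
    set s : ℝ := a / b with hs_def
    have hbpos : 0 < b := hb.1
    have hspos : 0 < s := div_pos ha.1 hbpos
    have hs1 : s < 1 := (div_lt_one hbpos).2 hab
    have htpos : 0 < t := by simp [ht_def]; linarith
    have hts : t + s = 1 := by ring
    have := hSC.2 h0mem hbmem hne htpos hspos hts
    have hcomb : t • (0:ℝ) + s • b = a := by
      simp [smul_eq_mul, hs_def]
      field_simp
    rw [hcomb, hH0, hHa, hHb] at this
    simp at this
  intro b hb
  rcases lt_trichotomy b β₀ with h | h | h
  · exact absurd (key b β₀ hb.1 hβ₀Ioc hb.2 hβ₀ h) (fun x => x)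
  · exact h
  · exact absurd (key β₀ b hβ₀Ioc hb.1 hβ₀ hb.2 h) (fun x => x)
end

section
/- Let H(β) = 1 - β - Π_{j∈d}(1 - c_j β) with finite d, |d| ≥ 2, and 0 < c_j ≤ 1 for all j. Then H(0) = 0, and if Σ_{j∈d} c_j > 1, then H is positive on an interval (0, ε) for some ε > 0 and H(1) = -Π_{j∈d}(1 - c_j) ≤ 0, so by the intermediate value theorem H has a root in (0, 1]. -/
/-- For `H(β) = 1 - β - Π_{j∈d}(1 - c_j β)` with `|d| ≥ 2` and `0 < c_j ≤ 1`:
`H(0) = 0`; if `Σ_j c_j > 1` then `H > 0` on some interval `(0, ε)`,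
`H(1) = -Π_j (1-c_j)`, and hence `H` has a root in `(0, 1]`. -/
theorem likelihood_poly_root_exists {ι : Type*} (d : Finset ι) (hd : 2 ≤ d.card)
    (c : ι → ℝ) (hc : ∀ j ∈ d, 0 < c j ∧ c j ≤ 1) (hsum : 1 < ∑ j ∈ d, c j) :
    let H : ℝ → ℝ := fun β => 1 - β - ∏ j ∈ d, (1 - c j * β)
    H 0 = 0 ∧
    (∃ ε > 0, ∀ β ∈ Set.Ioo (0:ℝ) ε, 0 < H β) ∧
    H 1 = -∏ j ∈ d, (1 - c j) ∧ H 1 ≤ 0 ∧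
    ∃ β ∈ Set.Ioc (0:ℝ) 1, H β = 0 := by
  classical
  intro H
  have h0 : H 0 = 0 := by simp [H]
  -- derivative of H at 0 is (∑ c) - 1 > 0
  have hderiv : HasDerivAt H ((∑ j ∈ d, c j) - 1) 0 := by
    have hprod : HasDerivAt (fun β : ℝ => ∏ j ∈ d, (1 - c j * β))
        (∑ j ∈ d, (∏ k ∈ d.erase j, (1 - c k * (0:ℝ))) • (-(c j))) 0 := by
      apply HasDerivAt.fun_finsetProd
      intro i hi
      simpa using ((hasDerivAt_id (0:ℝ)).const_mul (c i)).const_sub 1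
    have : HasDerivAt H (-1 - ∑ j ∈ d, (∏ k ∈ d.erase j, (1 - c k * (0:ℝ))) • (-(c j))) 0 := by
      simpa [H, sub_sub] using ((hasDerivAt_id (0:ℝ)).const_sub 1).fun_sub hprod
    convert this using 1
    simp [smul_eq_mul]
    ring
  -- positivity on a right neighborhood
  have hpos : ∃ ε > 0, ∀ β ∈ Set.Ioo (0:ℝ) ε, 0 < H β := by
    have hs : Filter.Tendsto (slope H 0) (nhdsWithin 0 {(0:ℝ)}ᶜ)
        (nhds ((∑ j ∈ d, c j) - 1)) := hasDerivAt_iff_tendsto_slope.mp hderiv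
    have hs' : Filter.Tendsto (slope H 0) (nhdsWithin 0 (Set.Ioi 0))
        (nhds ((∑ j ∈ d, c j) - 1)) :=
      hs.mono_left (nhdsWithin_mono _ (fun x hx => ne_of_gt hx))
    have hev : ∀ᶠ β in nhdsWithin 0 (Set.Ioi 0), 0 < slope H 0 β :=
      hs'.eventually (eventually_gt_nhds (by linarith))
    rcases (mem_nhdsGT_iff_exists_Ioo_subset).mp hev with ⟨ε, hε, hsub⟩
    refine ⟨ε, hε, fun β hβ => ?_⟩
    have hslope : 0 < slope H 0 β := hsub hβ
    have : slope H 0 β = H β / β := by simp [slope, h0, div_eq_inv_mul]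
    have hβ0 : 0 < β := hβ.1
    have : 0 < H β / β := this ▸ hslope
    have := mul_pos this hβ0
    rwa [div_mul_cancel₀ _ (ne_of_gt hβ0)] at this
  have h1 : H 1 = -∏ j ∈ d, (1 - c j) := by simp [H]
  have hprodnn : 0 ≤ ∏ j ∈ d, (1 - c j) :=
    Finset.prod_nonneg fun j hj => by linarith [(hc j hj).2]
  have h1le : H 1 ≤ 0 := by rw [h1]; linarith
  refine ⟨h0, hpos, h1, h1le, ?_⟩
  rcases hpos with ⟨ε, hε, hP⟩
  set β₀ : ℝ := min (ε / 2) (1 / 2) with hβ₀def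
  have hβ₀pos : 0 < β₀ := lt_min (by linarith) (by norm_num)
  have hβ₀lt : β₀ < ε := lt_of_le_of_lt (min_le_left _ _) (by linarith)
  have hβ₀le1 : β₀ ≤ 1 := le_trans (min_le_right _ _) (by norm_num)
  have hHβ₀ : 0 < H β₀ := hP β₀ ⟨hβ₀pos, hβ₀lt⟩
  have hcont : ContinuousOn H (Set.Icc β₀ 1) := by
    apply Continuous.continuousOn
    exact (continuous_const.sub continuous_id).sub
      (continuous_finset_prod _ fun j _ => continuous_const.sub (continuous_const.mul continuous_id))
  have : (0:ℝ) ∈ Set.Icc (H 1) (H β₀) := ⟨h1le, le_of_lt hHβ₀⟩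
  rcases intermediate_value_Icc' hβ₀le1 hcont this with ⟨x, hx, hHx⟩
  exact ⟨x, ⟨lt_of_lt_of_le hβ₀pos hx.1, hx.2⟩, hHx⟩
end
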